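/- Over a field k of characteristic zero, the monoid algebra kR_n of the rook monoid is isomorphic as a k-algebra to the direct sum over r from 0 to n of the matrix algebras M_{C(n,r)}(kS_r), where the r-th summand consists of C(n,r)×C(n,r) matrices with entries in the group algebra kS_r. In particular kR_n is a split semisimple k-algebra. -/

import Mathlib

/-- The rook monoid `R_n`: partial injective maps from `Fin n` to itself,
modelled as functions `Fin n → Option (Fin n)` that are injective on their domain. -/
def RookFun (n : ℕ) : Type :=
  {f : Fin n → Option (Fin n) // ∀ i j a, f i = some a → f j = some a → i = j}

namespace RookFun

variable {n : ℕ}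

instance : Fintype (RookFun n) :=
  inferInstanceAs (Fintype {f : Fin n → Option (Fin n) //
    ∀ i j a, f i = some a → f j = some a → i = j})

instance : DecidableEq (RookFun n) :=
  inferInstanceAs (DecidableEq {f : Fin n → Option (Fin n) //
    ∀ i j a, f i = some a → f j = some a → i = j})

/-- Composition of partial maps: `(σ * τ) i = σ (τ i)` (first `τ`, then `σ`). -/
instance : Mul (RookFun n) :=
  ⟨fun σ τ => ⟨fun i => (τ.1 i).bind σ.1, by
    intro i j a hi hj
    rcases Option.bind_eq_some_iff.mp hi with ⟨b, hb, hb'⟩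
    rcases Option.bind_eq_some_iff.mp hj with ⟨c, hc, hc'⟩
    have hbc : b = c := σ.2 _ _ _ hb' hc'
    subst hbc
    exact τ.2 _ _ _ hb hc⟩⟩

instance : One (RookFun n) :=
  ⟨⟨some, fun i j a hi hj => by
    rw [Option.some.inj hi, Option.some.inj hj]⟩⟩

instance : Monoid (RookFun n) where
  mul_assoc a b c := Subtype.ext (funext fun i => by
    show (c.1 i).bind (fun x => (b.1 x).bind a.1) = ((c.1 i).bind b.1).bind a.1
    cases c.1 i <;> rfl)
  one_mul a := Subtype.ext (funext fun i => by
    show (a.1 i).bind some = a.1 i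
    cases a.1 i <;> rfl)
  mul_one a := Subtype.ext (funext fun i => by
    show (some i).bind a.1 = a.1 i
    rfl)

/-- The domain of a partial map. -/
def dom (σ : RookFun n) : Finset (Fin n) :=
  Finset.univ.filter fun i => (σ.1 i).isSome

/-- The range of a partial map. -/
def ran (σ : RookFun n) : Finset (Fin n) :=
  Finset.univ.filter fun j => ∃ i, σ.1 i = some j

/-- The partial identity `ε_X` on a subset `X`. -/
def eps (X : Finset (Fin n)) : RookFun n :=
  ⟨fun i => if i ∈ X then some i else none, by
    intro i j a hi hj
    by_cases h1 : i ∈ X <;> by_cases h2 : j ∈ X <;>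
      simp [h1, h2] at hi hj
    exact hi.trans hj.symm⟩

end RookFun

namespace RookFun


lemma mul_def (σ τ : RookFun n) (i : Fin n) : (σ * τ).1 i = (τ.1 i).bind σ.1 := rfl

lemma one_def (i : Fin n) : (1 : RookFun n).1 i = some i := rfl

lemma mem_dom {σ : RookFun n} {i : Fin n} : i ∈ dom σ ↔ (σ.1 i).isSome := by
  simp [dom]

lemma dom_one : dom (1 : RookFun n) = Finset.univ := by
  ext i; simp [mem_dom, one_def]

def img (σ : RookFun n) (J : Finset (Fin n)) : Finset (Fin n) :=
  J.biUnion fun j => (σ.1 j).toFinset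

lemma mem_img {σ : RookFun n} {J : Finset (Fin n)} {a : Fin n} :
    a ∈ img σ J ↔ ∃ j ∈ J, σ.1 j = some a := by
  simp [img, Option.mem_toFinset, Option.mem_def]

lemma img_one (J : Finset (Fin n)) : img (1 : RookFun n) J = J := by
  ext a; simp [mem_img, one_def]

lemma card_img {σ : RookFun n} {J : Finset (Fin n)} (h : J ⊆ dom σ) :
    (img σ J).card = J.card := by
  rw [img, Finset.card_biUnion]
  · rw [Finset.card_eq_sum_ones]
    refine Finset.sum_congr rfl fun j hj => ?_
    obtain ⟨a, ha⟩ := Option.isSome_iff_exists.mp (mem_dom.mp (h hj))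
    simp [ha]
  · intro x hx y hy hxy
    simp only [Finset.disjoint_left, Option.mem_toFinset, Option.mem_def]
    intro a ha ha'
    exact hxy (σ.2 _ _ _ ha ha')

lemma img_img (σ τ : RookFun n) (K : Finset (Fin n)) :
    img σ (img τ K) = img (σ * τ) K := by
  ext a
  simp only [mem_img, mul_def, Option.bind_eq_some_iff]
  constructor
  · rintro ⟨j, ⟨i, hi, hij⟩, hj⟩; exact ⟨i, hi, j, hij, hj⟩
  · rintro ⟨i, hi, j, hij, hj⟩; exact ⟨j, ⟨i, hi, hij⟩, hj⟩

lemma dom_mul_subset (σ τ : RookFun n) : dom (σ * τ) ⊆ dom τ := by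
  intro i hi
  rw [mem_dom, mul_def] at hi
  rw [mem_dom]
  cases h : τ.1 i with
  | none => rw [h] at hi; simp at hi
  | some b => simp

lemma mem_dom_mul {σ τ : RookFun n} {i : Fin n} {b : Fin n} (hb : τ.1 i = some b)
    (hσ : b ∈ dom σ) : i ∈ dom (σ * τ) := by
  rw [mem_dom, mul_def, hb, Option.bind_some]
  exact mem_dom.mp hσ

/-- The restriction of `σ` to `J`, as a map `J → I` where `I = img σ J`. -/
def restr (σ : RookFun n) {I J : Finset (Fin n)} (h₁ : J ⊆ dom σ) (h₂ : img σ J = I)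
    (x : {x // x ∈ J}) : {y // y ∈ I} :=
  ⟨(σ.1 x.1).get (mem_dom.mp (h₁ x.2)),
    h₂ ▸ mem_img.mpr ⟨x.1, x.2, (Option.some_get _).symm⟩⟩

lemma restr_spec (σ : RookFun n) {I J : Finset (Fin n)} (h₁ : J ⊆ dom σ) (h₂ : img σ J = I)
    (x : {x // x ∈ J}) : σ.1 x.1 = some (restr σ h₁ h₂ x).1 :=
  (Option.some_get _).symm

lemma restr_injective (σ : RookFun n) {I J : Finset (Fin n)} (h₁ : J ⊆ dom σ)
    (h₂ : img σ J = I) : Function.Injective (restr σ h₁ h₂) := by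
  intro x y hxy
  refine Subtype.ext (σ.2 _ _ (restr σ h₁ h₂ x).1 (restr_spec σ h₁ h₂ x) ?_)
  rw [restr_spec σ h₁ h₂ y, hxy]

noncomputable def restrEquiv (σ : RookFun n) {I J : Finset (Fin n)} (h₁ : J ⊆ dom σ) (h₂ : img σ J = I) :
    {x // x ∈ J} ≃ {y // y ∈ I} :=
  Equiv.ofBijective (restr σ h₁ h₂)
    ((Fintype.bijective_iff_injective_and_card _).mpr ⟨restr_injective σ h₁ h₂, by
      rw [Fintype.card_coe, Fintype.card_coe, ← h₂, card_img h₁]⟩)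

/-- `p(σ ε_J) : S_r`, as a permutation of `Fin r`. -/
noncomputable def permOn (σ : RookFun n) {r : ℕ} {I J : Finset (Fin n)} (hI : I.card = r) (hJ : J.card = r)
    (h₁ : J ⊆ dom σ) (h₂ : img σ J = I) : Equiv.Perm (Fin r) :=
  ((J.orderIsoOfFin hJ).toEquiv.trans (restrEquiv σ h₁ h₂)).trans
    (I.orderIsoOfFin hI).symm.toEquiv


lemma oiso_coe {α β : Type} [LinearOrder α] [LinearOrder β] (f : α ≃o β) :
    ⇑f.toEquiv = ⇑f := rfl

lemma oiso_symm_coe {α β : Type} [LinearOrder α] [LinearOrder β] (f : α ≃o β) :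
    ⇑f.symm.toEquiv = ⇑f.symm := rfl

lemma permOn_one {r : ℕ} {J : Finset (Fin n)} (hJ hJ' : J.card = r)
    (h₁ : J ⊆ dom (1 : RookFun n)) (h₂ : img (1 : RookFun n) J = J) :
    permOn (1 : RookFun n) hJ' hJ h₁ h₂ = 1 := by
  ext x
  simp only [permOn, Equiv.trans_apply, Equiv.Perm.coe_one, id_eq, Equiv.symm_trans_apply, oiso_coe, oiso_symm_coe]
  have h : restrEquiv (1 : RookFun n) h₁ h₂ ((J.orderIsoOfFin hJ) x)
      = (J.orderIsoOfFin hJ) x := by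
    apply Subtype.ext
    have := restr_spec (1 : RookFun n) h₁ h₂ ((J.orderIsoOfFin hJ) x)
    rw [one_def] at this
    exact (Option.some_inj.mp this).symm
  rw [h]
  simp

lemma permOn_mul (σ τ : RookFun n) {r : ℕ} {I J K : Finset (Fin n)}
    (hI : I.card = r) (hJ : J.card = r) (hK : K.card = r)
    (hσ₁ : J ⊆ dom σ) (hσ₂ : img σ J = I) (hτ₁ : K ⊆ dom τ) (hτ₂ : img τ K = J)
    (h₁ : K ⊆ dom (σ * τ)) (h₂ : img (σ * τ) K = I) :
    permOn σ hI hJ hσ₁ hσ₂ * permOn τ hJ hK hτ₁ hτ₂ = permOn (σ * τ) hI hK h₁ h₂ := by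
  ext x
  simp only [permOn, Equiv.Perm.mul_apply, Equiv.trans_apply, oiso_coe, oiso_symm_coe,
    OrderIso.apply_symm_apply]
  congr 1
  set z := (K.orderIsoOfFin hK) x with hz
  refine congrArg _ (Subtype.ext ?_)
  have e1 : σ.1 (restr τ hτ₁ hτ₂ z).1
      = some (restr σ hσ₁ hσ₂ (restrEquiv τ hτ₁ hτ₂ z)).1 := restr_spec σ hσ₁ hσ₂ _
  have e2 : (σ * τ).1 z.1 = some (restr (σ * τ) h₁ h₂ z).1 := restr_spec (σ * τ) h₁ h₂ z
  have e3 : (σ * τ).1 z.1 = σ.1 (restr τ hτ₁ hτ₂ z).1 := by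
    rw [mul_def, restr_spec τ hτ₁ hτ₂ z, Option.bind_some]
  exact Option.some_inj.mp (e1.symm.trans (e3.symm.trans e2))


/-- The target algebra. -/
abbrev Target (n : ℕ) (k : Type) [Field k] : Type :=
  Π r : Fin (n + 1),
    Matrix {X : Finset (Fin n) // X.card = r.val}
      {X : Finset (Fin n) // X.card = r.val}
      (MonoidAlgebra k (Equiv.Perm (Fin r.val)))

noncomputable def phi0 (k : Type) [Field k] {n : ℕ} (σ : RookFun n) : Target n k :=
  fun r I J =>
    if h : J.1 ⊆ dom σ ∧ img σ J.1 = I.1 then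
      MonoidAlgebra.single (permOn σ I.2 J.2 h.1 h.2) 1
    else 0

lemma phi0_one (k : Type) [Field k] {n : ℕ} : phi0 k (1 : RookFun n) = 1 := by
  funext r
  funext I J
  show phi0 k 1 r I J = (1 : Matrix {X : Finset (Fin n) // X.card = r.val}
    {X : Finset (Fin n) // X.card = r.val} (MonoidAlgebra k (Equiv.Perm (Fin r.val)))) I J
  rw [Matrix.one_apply]
  by_cases h : I = J
  · subst h
    rw [phi0, dif_pos ⟨by rw [dom_one]; exact Finset.subset_univ _, img_one I.1⟩, if_pos rfl]
    rw [permOn_one]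
    rfl
  · rw [if_neg h, phi0, dif_neg]
    rintro ⟨-, h2⟩
    exact h (Subtype.ext ((img_one J.1 ▸ h2).symm))

lemma phi0_mul (k : Type) [Field k] {n : ℕ} (σ τ : RookFun n) :
    phi0 k (σ * τ) = phi0 k σ * phi0 k τ := by
  funext r
  funext I K
  rw [show (phi0 k σ * phi0 k τ) r = phi0 k σ r * phi0 k τ r from rfl, Matrix.mul_apply]
  by_cases h : K.1 ⊆ dom (σ * τ) ∧ img (σ * τ) K.1 = I.1
  · have hKτ : K.1 ⊆ dom τ := h.1.trans (dom_mul_subset σ τ)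
    set J0 : {X : Finset (Fin n) // X.card = r.val} :=
      ⟨img τ K.1, by rw [card_img hKτ]; exact K.2⟩ with hJ0
    have hτc : K.1 ⊆ dom τ ∧ img τ K.1 = J0.1 := ⟨hKτ, rfl⟩
    have hJσ : J0.1 ⊆ dom σ := by
      intro b hb
      obtain ⟨i, hi, hib⟩ := mem_img.mp hb
      have := h.1 hi
      rw [mem_dom, mul_def, hib, Option.bind_some] at this
      exact mem_dom.mpr this
    have hσc : J0.1 ⊆ dom σ ∧ img σ J0.1 = I.1 := ⟨hJσ, by rw [img_img]; exact h.2⟩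
    rw [phi0, dif_pos h, Finset.sum_eq_single J0]
    · rw [phi0, phi0, dif_pos hσc, dif_pos hτc, MonoidAlgebra.single_mul_single, mul_one,
        permOn_mul σ τ I.2 J0.2 K.2 hσc.1 hσc.2 hτc.1 hτc.2 h.1 h.2]
    · intro J _ hJne
      by_cases hτ' : K.1 ⊆ dom τ ∧ img τ K.1 = J.1
      · exact absurd (Subtype.ext (hτ'.2.symm.trans rfl : J.1 = J0.1)).symm hJne.symm
      · rw [phi0, phi0, dif_neg hτ', mul_zero]
    · intro hJ0mem
      exact absurd (Finset.mem_univ J0) hJ0mem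
  · rw [phi0, dif_neg h]
    symm
    apply Finset.sum_eq_zero
    intro J _
    by_cases hτ' : K.1 ⊆ dom τ ∧ img τ K.1 = J.1
    · by_cases hσ' : J.1 ⊆ dom σ ∧ img σ J.1 = I.1
      · exfalso
        apply h
        constructor
        · intro i hi
          obtain ⟨b, hb⟩ := Option.isSome_iff_exists.mp (mem_dom.mp (hτ'.1 hi))
          exact mem_dom_mul hb (hσ'.1 (hτ'.2 ▸ mem_img.mpr ⟨i, hi, hb⟩))
        · rw [← img_img, hτ'.2, hσ'.2]
      · rw [phi0, phi0, dif_neg hσ', zero_mul]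
    · rw [phi0, phi0, dif_neg hτ', mul_zero]

noncomputable def phiHom (k : Type) [Field k] (n : ℕ) : RookFun n →* Target n k where
  toFun := phi0 k
  map_one' := phi0_one k
  map_mul' := phi0_mul k

lemma eq_of_permOn_eq {n : ℕ} {σ τ : RookFun n} {r : ℕ} {I J : Finset (Fin n)}
    (hI : I.card = r) (hJ : J.card = r)
    (hσ₁ : J ⊆ dom σ) (hσ₂ : img σ J = I) (hτ₁ : J ⊆ dom τ) (hτ₂ : img τ J = I)
    (hdσ : dom σ = J) (hdτ : dom τ = J)
    (hp : permOn σ hI hJ hσ₁ hσ₂ = permOn τ hI hJ hτ₁ hτ₂) : σ = τ := by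
  have hres : ∀ x, restrEquiv σ hσ₁ hσ₂ x = restrEquiv τ hτ₁ hτ₂ x := by
    intro x
    have h2 := congrFun (congrArg (fun (e : Equiv.Perm (Fin r)) => (e : Fin r → Fin r)) hp)
      ((J.orderIsoOfFin hJ).symm x)
    simp only [permOn, Equiv.trans_apply, oiso_coe, oiso_symm_coe,
      OrderIso.apply_symm_apply] at h2
    exact (I.orderIsoOfFin hI).symm.injective h2
  apply Subtype.ext
  funext i
  by_cases hmem : i ∈ J
  · rw [restr_spec σ hσ₁ hσ₂ ⟨i, hmem⟩, restr_spec τ hτ₁ hτ₂ ⟨i, hmem⟩]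
    exact congrArg (fun y => some y.1) (hres ⟨i, hmem⟩)
  · rw [Option.not_isSome_iff_eq_none.mp (fun hs => hmem (hdσ ▸ mem_dom.mpr hs)),
      Option.not_isSome_iff_eq_none.mp (fun hs => hmem (hdτ ▸ mem_dom.mpr hs))]

noncomputable def Phi (k : Type) [Field k] (n : ℕ) :
    MonoidAlgebra k (RookFun n) →ₐ[k] Target n k :=
  MonoidAlgebra.lift k (Target n k) (RookFun n) (phiHom k n)

lemma Phi_injective (k : Type) [Field k] (n : ℕ) : Function.Injective (Phi k n) := by
  rw [injective_iff_map_eq_zero]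
  intro x hx
  by_contra hne
  have hsupp : x.coeff.support.Nonempty := Finsupp.support_nonempty_iff.mpr (by rwa [Ne, MonoidAlgebra.coeff_eq_zero])
  obtain ⟨σ0, hσ0, hm⟩ := Finset.mem_image.mp
    ((x.coeff.support.image fun σ => (dom σ).card).max'_mem (hsupp.image _))
  have hmax : ∀ σ ∈ x.coeff.support, (dom σ).card ≤ (dom σ0).card := fun σ hσ =>
    hm ▸ Finset.le_max' _ _ (Finset.mem_image_of_mem (fun σ => (dom σ).card) hσ)
  have hr : (dom σ0).card < n + 1 :=
    Nat.lt_succ_of_le (le_trans (Finset.card_le_univ _) (by simp))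
  set r : Fin (n + 1) := ⟨(dom σ0).card, hr⟩ with hrdef
  set J : {X : Finset (Fin n) // X.card = r.val} := ⟨dom σ0, rfl⟩ with hJdef
  set I : {X : Finset (Fin n) // X.card = r.val} :=
    ⟨img σ0 (dom σ0), card_img (Finset.Subset.refl _)⟩ with hIdef
  set g0 := permOn σ0 I.2 J.2 (Finset.Subset.refl _) rfl with hg0def
  have h0 : (Phi k n x r I J).coeff g0 = 0 := by rw [hx]; rfl
  have hexp : (Phi k n x r I J).coeff g0 = ∑ σ ∈ x.coeff.support, x.coeff σ * ((phi0 k σ r I J).coeff g0) := by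
    rw [Phi, MonoidAlgebra.lift_apply, Finsupp.sum]
    rw [Finset.sum_apply, Matrix.sum_apply, MonoidAlgebra.coeff_sum, Finset.sum_apply']
    refine Finset.sum_congr rfl fun σ _ => ?_
    rw [Pi.smul_apply, Matrix.smul_apply, MonoidAlgebra.coeff_smul_apply, smul_eq_mul]
    rfl
  have key : ∑ σ ∈ x.coeff.support, x.coeff σ * ((phi0 k σ r I J).coeff g0) = x.coeff σ0 := by
    rw [Finset.sum_eq_single σ0]
    · rw [phi0, dif_pos ⟨Finset.Subset.refl (dom σ0), rfl⟩]
      have hone : (MonoidAlgebra.single (permOn σ0 I.2 J.2 (Finset.Subset.refl (dom σ0)) rfl)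
          (1 : k) : MonoidAlgebra k (Equiv.Perm (Fin r.val))).coeff g0 = 1 := Finsupp.single_eq_same
      rw [hone, mul_one]
    · intro σ hσ hne'
      by_cases hc : J.1 ⊆ dom σ ∧ img σ J.1 = I.1
      · have hdom : dom σ = J.1 := (Finset.eq_of_subset_of_card_le hc.1
          (show (dom σ).card ≤ (J.1 : Finset (Fin n)).card from hmax σ hσ)).symm
        rw [phi0, dif_pos hc, MonoidAlgebra.coeff_single, Finsupp.single_apply, if_neg, mul_zero]
        intro hpeq
        exact hne' (eq_of_permOn_eq I.2 J.2 hc.1 hc.2 (Finset.Subset.refl _) rfl hdom rfl hpeq)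
      · rw [phi0, dif_neg hc, MonoidAlgebra.coeff_zero, Finsupp.coe_zero, Pi.zero_apply, mul_zero]
    · intro h; exact absurd hσ0 h
  exact (Finsupp.mem_support_iff.mp hσ0) (by rw [← key, ← hexp, h0])

noncomputable def ofData {n r : ℕ} (I J : Finset (Fin n)) (hI : I.card = r) (hJ : J.card = r)
    (π : Equiv.Perm (Fin r)) : RookFun n :=
  ⟨fun i => if h : i ∈ J then
      some ((I.orderIsoOfFin hI) (π ((J.orderIsoOfFin hJ).symm ⟨i, h⟩))).1 else none, by
    intro i j a hi hj
    dsimp only at hi hj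
    by_cases h1 : i ∈ J
    · by_cases h2 : j ∈ J
      · rw [dif_pos h1] at hi
        rw [dif_pos h2] at hj
        have hval := (Option.some_inj.mp hi).trans (Option.some_inj.mp hj).symm
        have h5 : π ((J.orderIsoOfFin hJ).symm ⟨i, h1⟩) = π ((J.orderIsoOfFin hJ).symm ⟨j, h2⟩) :=
          (I.orderIsoOfFin hI).injective (Subtype.ext hval)
        have h6 := π.injective h5
        have h7 := congrArg (fun y => ((J.orderIsoOfFin hJ) y).1) h6
        simpa using h7
      · rw [dif_neg h2] at hj; exact absurd hj (by simp)
    · rw [dif_neg h1] at hi; exact absurd hi (by simp)⟩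

lemma ofData_apply_mem {n r : ℕ} {I J : Finset (Fin n)} (hI : I.card = r) (hJ : J.card = r)
    (π : Equiv.Perm (Fin r)) {i : Fin n} (h : i ∈ J) :
    (ofData I J hI hJ π).1 i
      = some ((I.orderIsoOfFin hI) (π ((J.orderIsoOfFin hJ).symm ⟨i, h⟩))).1 :=
  dif_pos h

lemma ofData_apply_not_mem {n r : ℕ} {I J : Finset (Fin n)} (hI : I.card = r) (hJ : J.card = r)
    (π : Equiv.Perm (Fin r)) {i : Fin n} (h : i ∉ J) :
    (ofData I J hI hJ π).1 i = none :=
  dif_neg h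

lemma dom_ofData {n r : ℕ} {I J : Finset (Fin n)} (hI : I.card = r) (hJ : J.card = r)
    (π : Equiv.Perm (Fin r)) : dom (ofData I J hI hJ π) = J := by
  ext i
  by_cases h : i ∈ J
  · simp [mem_dom, ofData_apply_mem hI hJ π h, h]
  · simp [mem_dom, ofData_apply_not_mem hI hJ π h, h]

lemma img_ofData {n r : ℕ} {I J : Finset (Fin n)} (hI : I.card = r) (hJ : J.card = r)
    (π : Equiv.Perm (Fin r)) : img (ofData I J hI hJ π) J = I := by
  ext a
  simp only [mem_img]
  constructor
  · rintro ⟨j, hj, hval⟩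
    rw [ofData_apply_mem hI hJ π hj] at hval
    exact (Option.some_inj.mp hval) ▸ ((I.orderIsoOfFin hI) _).2
  · intro ha
    set z := (J.orderIsoOfFin hJ) (π.symm ((I.orderIsoOfFin hI).symm ⟨a, ha⟩)) with hz
    refine ⟨z.1, z.2, ?_⟩
    rw [ofData_apply_mem hI hJ π z.2]
    congr 1
    have : (⟨z.1, z.2⟩ : {x // x ∈ J}) = z := Subtype.coe_eta z z.2
    rw [this, hz, OrderIso.symm_apply_apply, Equiv.apply_symm_apply,
      OrderIso.apply_symm_apply]

/-- The index data for the matrix algebras. -/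
abbrev SData (n : ℕ) : Type :=
  Σ r : Fin (n + 1), {X : Finset (Fin n) // X.card = r.val} ×
    {X : Finset (Fin n) // X.card = r.val} × Equiv.Perm (Fin r.val)

noncomputable def gMap (n : ℕ) : SData n → RookFun n :=
  fun p => ofData p.2.1.1 p.2.2.1.1 p.2.1.2 p.2.2.1.2 p.2.2.2

lemma gMap_injective (n : ℕ) : Function.Injective (gMap n) := by
  rintro ⟨r, I, J, π⟩ ⟨r', I', J', π'⟩ h
  have hJ : J.1 = J'.1 := by
    rw [← dom_ofData I.2 J.2 π, ← dom_ofData I'.2 J'.2 π']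
    exact congrArg dom h
  obtain rfl : r = r' := Fin.ext (by rw [← J.2, ← J'.2, hJ])
  obtain rfl : J = J' := Subtype.ext hJ
  obtain rfl : I = I' := Subtype.ext (by
    rw [← img_ofData I.2 J.2 π, ← img_ofData I'.2 J.2 π']
    exact congrArg (fun σ => img σ J.1) h)
  obtain rfl : π = π' := by
    ext x
    have hx := congrFun (congrArg Subtype.val h) ((J.1.orderIsoOfFin J.2) x).1
    dsimp only [gMap] at hx
    rw [ofData_apply_mem I.2 J.2 π ((J.1.orderIsoOfFin J.2) x).2,
      ofData_apply_mem I.2 J.2 π' ((J.1.orderIsoOfFin J.2) x).2] at hx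
    have hx2 := Option.some_inj.mp hx
    have heta : (⟨((J.1.orderIsoOfFin J.2) x).1, ((J.1.orderIsoOfFin J.2) x).2⟩ : {y // y ∈ J.1})
        = (J.1.orderIsoOfFin J.2) x := Subtype.coe_eta _ _
    rw [heta, OrderIso.symm_apply_apply] at hx2
    have := (I.1.orderIsoOfFin I.2).injective (Subtype.ext hx2)
    exact congrArg Fin.val this
  rfl


end RookFun


section MatrixSemisimple

variable (R : Type) [Ring R] (ι : Type) [Fintype ι] [DecidableEq ι]

local instance matSMul : SMul (Matrix ι ι R) (ι → R) := ⟨fun M v => M.mulVec v⟩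

local instance matMod : Module (Matrix ι ι R) (ι → R) where
  one_smul v := Matrix.one_mulVec v
  mul_smul M N v := (Matrix.mulVec_mulVec v M N).symm
  smul_zero M := Matrix.mulVec_zero M
  smul_add M v w := Matrix.mulVec_add M v w
  add_smul M N v := Matrix.add_mulVec M N v
  zero_smul v := Matrix.zero_mulVec v

lemma mat_smul_def (M : Matrix ι ι R) (v : ι → R) : M • v = M.mulVec v := rfl

lemma stdBasis_mulVec (i j : ι) (c : R) (v : ι → R) :
    (Matrix.single i j c).mulVec v = Pi.single i (c * v j) := by
  funext l
  simp only [Matrix.mulVec, dotProduct, Matrix.single, Matrix.of_apply, ite_and,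
    ite_mul, zero_mul]
  by_cases h : i = l
  · subst h
    simp [Finset.sum_ite_eq]
  · rw [Finset.sum_eq_zero fun m _ => by rw [if_neg h], Pi.single_eq_of_ne (Ne.symm h)]

/-- The `A`-submodule `W^ι` of `ι → R` for a left ideal `W ≤ R`. -/
def colSub (W : Submodule R R) : Submodule (Matrix ι ι R) (ι → R) where
  carrier := {v | ∀ i, v i ∈ W}
  add_mem' := fun hv hw i => W.add_mem (hv i) (hw i)
  zero_mem' := fun i => W.zero_mem
  smul_mem' := fun M v hv => by
    intro i
    show M.mulVec v i ∈ W
    rw [Matrix.mulVec, dotProduct]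
    exact Submodule.sum_mem W fun j _ => W.smul_mem (M i j) (hv j)

variable [Nonempty ι]

/-- Inverse to `colSub`. -/
def rowOf (U : Submodule (Matrix ι ι R) (ι → R)) : Submodule R R where
  carrier := {r | Pi.single (Classical.arbitrary ι) r ∈ U}
  add_mem' := fun {a b} ha hb => by
    show Pi.single _ (a + b) ∈ U
    rw [Pi.single_add]
    exact U.add_mem ha hb
  zero_mem' := by
    show Pi.single _ (0 : R) ∈ U
    rw [Pi.single_zero]
    exact U.zero_mem
  smul_mem' := fun c {r} hr => by
    have := U.smul_mem (Matrix.single (Classical.arbitrary ι) (Classical.arbitrary ι) c) hr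
    rwa [mat_smul_def, stdBasis_mulVec, Pi.single_eq_same] at this

lemma mem_colSub {W : Submodule R R} {v : ι → R} : v ∈ colSub R ι W ↔ ∀ i, v i ∈ W := Iff.rfl

lemma rowOf_colSub (W : Submodule R R) : rowOf R ι (colSub R ι W) = W := by
  ext r
  constructor
  · intro h
    have := h (Classical.arbitrary ι)
    rwa [Pi.single_eq_same] at this
  · intro h i
    by_cases hi : (Classical.arbitrary ι) = i
    · subst hi; rwa [Pi.single_eq_same]
    · rw [Pi.single_eq_of_ne (Ne.symm hi)]; exact W.zero_mem

lemma colSub_rowOf (U : Submodule (Matrix ι ι R) (ι → R)) : colSub R ι (rowOf R ι U) = U := by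
  ext v
  constructor
  · intro h
    have hv : v = ∑ i, (Matrix.single i (Classical.arbitrary ι) (1 : R)) •
        (Pi.single (Classical.arbitrary ι) (v i) : ι → R) := by
      have hterm : ∀ i : ι, (Matrix.single i (Classical.arbitrary ι) (1 : R)) •
          (Pi.single (Classical.arbitrary ι) (v i) : ι → R) = Pi.single i (v i) := fun i => by
        rw [mat_smul_def, stdBasis_mulVec]
        simp
      calc v = ∑ i, Pi.single i (v i) := (Finset.univ_sum_single v).symm
        _ = _ := Finset.sum_congr rfl fun i _ => (hterm i).symm
    rw [hv]
    exact Submodule.sum_mem U fun i _ =>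
      U.smul_mem _ (h i : Pi.single (Classical.arbitrary ι) (v i) ∈ U)
  · intro hv i
    show Pi.single (Classical.arbitrary ι) (v i) ∈ U
    have := U.smul_mem (Matrix.single (Classical.arbitrary ι) i (1 : R)) hv
    rwa [mat_smul_def, stdBasis_mulVec, one_mul] at this

/-- The lattice isomorphism `Submodule R R ≃o Submodule (M_ι(R)) (ι → R)`. -/
def colOrderIso : Submodule R R ≃o Submodule (Matrix ι ι R) (ι → R) where
  toFun := colSub R ι
  invFun := rowOf R ι
  left_inv := rowOf_colSub R ι
  right_inv := colSub_rowOf R ι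
  map_rel_iff' := by
    intro W W'
    constructor
    · intro h r hr
      have : Pi.single (Classical.arbitrary ι) r ∈ colSub R ι W := by
        intro i
        by_cases hi : (Classical.arbitrary ι) = i
        · subst hi; rwa [Pi.single_eq_same]
        · rw [Pi.single_eq_of_ne (Ne.symm hi)]; exact W.zero_mem
      have h2 := h this (Classical.arbitrary ι)
      rwa [Pi.single_eq_same] at h2
    · intro h v hv i
      exact h (hv i)

instance vec_isSemisimple [IsSemisimpleRing R] :
    IsSemisimpleModule (Matrix ι ι R) (ι → R) :=
  by
    have := (colOrderIso R ι).complementedLattice_iff.mp inferInstance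
    exact ⟨⟩

/-- Matrix algebra over a semisimple ring is semisimple. -/
theorem matrix_isSemisimpleRing [IsSemisimpleRing R] : IsSemisimpleRing (Matrix ι ι R) := by
  -- Matrix ι ι R ≅ (ι → (ι → R)) as a module over itself
  let e : Matrix ι ι R ≃ₗ[Matrix ι ι R] (ι → (ι → R)) :=
    { toFun := fun M => fun j i => M i j
      map_add' := fun M N => rfl
      map_smul' := fun M N => by
        funext j i
        show (M * N) i j = (M.mulVec fun i => N i j) i
        rw [Matrix.mulVec, dotProduct, Matrix.mul_apply]
      invFun := fun f => Matrix.of fun i j => f j i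
      left_inv := fun M => rfl
      right_inv := fun f => rfl }
  have : IsSemisimpleModule (Matrix ι ι R) (ι → (ι → R)) := by
    apply isSemisimpleModule_of_isSemisimpleModule_submodule'
      (p := fun j => LinearMap.range (LinearMap.single (Matrix ι ι R) (fun _ : ι => ι → R) j))
    · intro j
      have hinj : Function.Injective
          (LinearMap.single (Matrix ι ι R) (fun _ : ι => ι → R) j) := by
        rw [LinearMap.coe_single]
        exact Pi.single_injective j
      exact IsSemisimpleModule.congr (LinearEquiv.ofInjective _ hinj).symm
    · simp_rw [LinearMap.range_eq_map, Submodule.iSup_map_single, Submodule.pi_top]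
  exact IsSemisimpleModule.congr e

end MatrixSemisimple

open Module in
lemma finrank_matrix_pi (k : Type) [Field k] {B : Type} [AddCommGroup B] [Module k B]
    [Module.Finite k B] [Module.Free k B] {m : Type} [Fintype m] :
    finrank k (Matrix m m B) = Fintype.card m * (Fintype.card m * finrank k B) := by
  rw [← LinearEquiv.finrank_eq (Matrix.ofLinearEquiv k (m := m) (n := m) (α := B))]
  rw [Module.finrank_pi_fintype, Finset.sum_congr rfl fun i _ => Module.finrank_pi_fintype k,
    Finset.sum_congr rfl fun (i : m) _ => Finset.sum_const (finrank k B), Finset.sum_const]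
  simp [mul_comm]

open RookFun Module in
/-- over a field `k` of characteristic zero, the monoid algebra `k R_n` of the
rook monoid is isomorphic as a `k`-algebra to `⨁_{r=0}^n M_{C(n,r)}(k S_r)`, where the
`r`-th summand is the algebra of matrices with rows and columns indexed by the
`r`-element subsets of `{1,…,n}` and entries in the group algebra `k S_r`; in particular
`k R_n` is a semisimple `k`-algebra. -/
theorem rookMonoidAlgebra_iso_matrixAlgebras (n : ℕ) (k : Type) [Field k] [CharZero k] :
    Nonempty (MonoidAlgebra k (RookFun n) ≃ₐ[k]
      Π r : Fin (n + 1),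
        Matrix {X : Finset (Fin n) // X.card = r.val}
          {X : Finset (Fin n) // X.card = r.val}
          (MonoidAlgebra k (Equiv.Perm (Fin r.val)))) ∧
    IsSemisimpleRing (MonoidAlgebra k (RookFun n)) := by
  haveI hfin : ∀ r : Fin (n + 1), Module.Finite k (MonoidAlgebra k (Equiv.Perm (Fin r.val))) :=
    fun r => inferInstance
  haveI hfree : ∀ r : Fin (n + 1), Module.Free k (MonoidAlgebra k (Equiv.Perm (Fin r.val))) :=
    fun r => inferInstance
  haveI hne : ∀ r : Fin (n + 1), Nonempty {X : Finset (Fin n) // X.card = r.val} := fun r => by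
    obtain ⟨B, -, hB⟩ := Finset.exists_subset_card_eq
      (s := (Finset.univ : Finset (Fin n))) (n := r.val) (by simpa using Fin.is_le r)
    exact ⟨⟨B, hB⟩⟩
  have hinj := Phi_injective k n
  have hfr1 : finrank k (MonoidAlgebra k (RookFun n)) = Fintype.card (RookFun n) :=
    (MonoidAlgebra.coeffLinearEquiv k).finrank_eq.trans (Module.finrank_finsupp_self k)
  have hfr2 : finrank k (Target n k) = Fintype.card (SData n) := by
    rw [Module.finrank_pi_fintype k, Fintype.card_sigma]
    refine Finset.sum_congr rfl fun r _ => ?_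
    have hB : finrank k (MonoidAlgebra k (Equiv.Perm (Fin r.val)))
        = Fintype.card (Equiv.Perm (Fin r.val)) :=
        (MonoidAlgebra.coeffLinearEquiv k).finrank_eq.trans (Module.finrank_finsupp_self k)
    rw [finrank_matrix_pi, hB, Fintype.card_prod, Fintype.card_prod]
  have heq : finrank k (MonoidAlgebra k (RookFun n)) = finrank k (Target n k) := by
    refine le_antisymm ?_ ?_
    · exact LinearMap.finrank_le_finrank_of_injective (f := (Phi k n).toLinearMap) hinj
    · rw [hfr1, hfr2]
      exact Fintype.card_le_of_injective _ (gMap_injective n)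
  have hsurj : Function.Surjective (Phi k n) := by
    have hrange : LinearMap.range (Phi k n).toLinearMap = ⊤ := by
      refine Submodule.eq_top_of_finrank_eq ?_
      rw [LinearMap.finrank_range_of_inj hinj, heq]
    rw [← AlgHom.coe_toLinearMap, ← LinearMap.range_eq_top]
    exact hrange
  let e : MonoidAlgebra k (RookFun n) ≃ₐ[k] Target n k :=
    AlgEquiv.ofBijective (Phi k n) ⟨hinj, hsurj⟩
  haveI hss : ∀ r : Fin (n + 1),
      IsSemisimpleRing (Matrix {X : Finset (Fin n) // X.card = r.val}
        {X : Finset (Fin n) // X.card = r.val} (MonoidAlgebra k (Equiv.Perm (Fin r.val)))) :=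
    fun r => matrix_isSemisimpleRing _ _
  haveI : IsSemisimpleRing (Target n k) := inferInstance
  exact ⟨⟨e⟩, (e.symm.toRingEquiv).isSemisimpleRing⟩
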